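/- For every positive integer n, the sum over all permutations σ of [n] of (-1) raised to the number of invisible inversions of σ equals 2^(⌊n/2⌋). (Hence the number of invisible inversions exhibits the cyclic sieving phenomenon with respect to involutions on S_n with 2^(⌊n/2⌋) fixed points.) -/

import Mathlib

open Finset

namespace InvInv

def P {n : ℕ} (σ : Equiv.Perm (Fin n)) (p : Fin n × Fin n) : Prop :=
  p.1 < p.2 ∧ σ p.2 < σ p.1 ∧ p.1 < σ p.2

instance {n : ℕ} (σ : Equiv.Perm (Fin n)) : DecidablePred (P σ) := fun _ => by
  unfold P; infer_instance

def stat {n : ℕ} (σ : Equiv.Perm (Fin n)) : ℕ := (univ.filter (P σ)).card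

lemma sign_eq_prod {n : ℕ} (σ : Equiv.Perm (Fin n)) :
    (-1 : ℤ) ^ stat σ = ∏ x : Fin n × Fin n, (if P σ x then (-1 : ℤ) else 1) := by
  rw [Finset.prod_ite, Finset.prod_const, Finset.prod_const, one_pow, mul_one, stat]

variable {k : ℕ}

def t0 (k : ℕ) : Fin (k + 2) := ⟨k, by omega⟩
def t1 (k : ℕ) : Fin (k + 2) := ⟨k + 1, by omega⟩

@[simp] lemma t0_val : (t0 k : ℕ) = k := rfl
@[simp] lemma t1_val : (t1 k : ℕ) = k + 1 := rfl

def τ (k : ℕ) : Equiv.Perm (Fin (k + 2)) := Equiv.swap (t0 k) (t1 k)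

def Fcond (σ : Equiv.Perm (Fin (k + 2))) : Prop :=
  k ≤ (σ (t0 k) : ℕ) ∧ k ≤ (σ (t1 k) : ℕ)

instance : DecidablePred (Fcond (k := k)) := fun _ => by unfold Fcond; infer_instance

lemma t0_ne_t1 : t0 k ≠ t1 k := by simp [t0, t1, Fin.ext_iff]

lemma val_cases (v : Fin (k + 2)) (h : k ≤ (v : ℕ)) : v = t0 k ∨ v = t1 k := by
  have := v.isLt
  rcases Nat.lt_or_ge (v : ℕ) (k + 1) with h1 | h1
  · left; exact Fin.ext (by simp only [t0_val]; omega)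
  · right; exact Fin.ext (by simp only [t1_val]; omega)

/-- The key sign-flip lemma. -/
lemma flip (σ : Equiv.Perm (Fin (k + 2))) (hσ : ¬ Fcond σ) :
    (-1 : ℤ) ^ stat (τ k * σ) = -(-1 : ℤ) ^ stat σ := by
  obtain ⟨a, ha⟩ : ∃ a, σ a = t1 k := ⟨σ⁻¹ (t1 k), σ.apply_symm_apply _⟩
  obtain ⟨b, hb⟩ : ∃ b, σ b = t0 k := ⟨σ⁻¹ (t0 k), σ.apply_symm_apply _⟩
  have hab : a ≠ b := by
    intro h; exact t0_ne_t1 (by rw [← hb, ← h, ha])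
  have habv : (a : ℕ) ≠ (b : ℕ) := fun h => hab (Fin.ext h)
  -- values at other positions
  have hv : ∀ y, y ≠ a → y ≠ b → (τ k * σ) y = σ y ∧ (σ y : ℕ) < k := by
    intro y h1 h2
    have h3 : σ y ≠ t1 k := fun h => h1 (σ.injective (h.trans ha.symm))
    have h4 : σ y ≠ t0 k := fun h => h2 (σ.injective (h.trans hb.symm))
    refine ⟨?_, ?_⟩
    · simp only [τ, Equiv.Perm.mul_apply]
      exact Equiv.swap_apply_of_ne_of_ne h4 h3
    · have h5 := (σ y).isLt
      have h6 : (σ y : ℕ) ≠ k := fun h => h4 (Fin.ext h)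
      have h7 : (σ y : ℕ) ≠ k + 1 := fun h => h3 (Fin.ext h)
      omega
  have hτa : ((τ k * σ) a : ℕ) = k := by
    simp only [τ, Equiv.Perm.mul_apply, ha]
    rw [Equiv.swap_apply_right]; rfl
  have hτb : ((τ k * σ) b : ℕ) = k + 1 := by
    simp only [τ, Equiv.Perm.mul_apply, hb]
    rw [Equiv.swap_apply_left]; rfl
  have hav : (σ a : ℕ) = k + 1 := by rw [ha]; rfl
  have hbv : (σ b : ℕ) = k := by rw [hb]; rfl
  -- the toggled pair
  set pq : Fin (k + 2) × Fin (k + 2) := if (a : ℕ) < b then (a, b) else (b, a) with hpq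
  have hmin : (pq.1 : ℕ) < k := by
    by_contra hcon
    push_neg at hcon
    have hka : k ≤ (a : ℕ) ∧ k ≤ (b : ℕ) := by
      by_cases h : (a : ℕ) < b <;> rw [hpq] at hcon <;> simp only [h, if_true, if_false] at hcon
      · exact ⟨hcon, by omega⟩
      · exact ⟨by omega, hcon⟩
    have h1 := val_cases a hka.1
    have h2 := val_cases b hka.2
    apply hσ
    constructor
    · rcases h2 with h | h
      · rw [← h, hb]; simp
      · rcases h1 with h' | h'
        · rw [← h', ha]; simp
        · exact absurd (h'.trans h.symm) hab
    · rcases h2 with h | h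
      · rcases h1 with h' | h'
        · exact absurd (h'.trans h.symm) hab
        · rw [← h', ha]; simp
      · rw [← h, hb]; simp
  -- all pairs other than pq are unchanged
  have claim1 : ∀ x : Fin (k + 2) × Fin (k + 2), x ≠ pq → (P (τ k * σ) x ↔ P σ x) := by
    rintro ⟨i, j⟩ hx
    rcases eq_or_ne i a with hia | hia
    · rcases eq_or_ne j a with hja | hja
      · rw [hia, hja]
        simp only [P, Fin.lt_def]
        omega
      rcases eq_or_ne j b with hjb | hjb
      · -- (i,j) = (a,b); since ≠ pq we must have b < a
        have hba : (b : ℕ) < a := by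
          by_contra h
          push_neg at h
          have h' : (a : ℕ) < b := by omega
          apply hx
          rw [hpq, if_pos h', hia, hjb]
        rw [hia, hjb]
        simp only [P, Fin.lt_def, hτa, hτb, hav, hbv]
        omega
      · obtain ⟨e1, e2⟩ := hv j hja hjb
        rw [hia]
        simp only [P, Fin.lt_def, hτa, e1, hav]
        omega
    rcases eq_or_ne i b with hib | hib
    · rcases eq_or_ne j a with hja | hja
      · have hab' : (a : ℕ) < b := by
          by_contra h
          push_neg at h
          apply hx
          rw [hpq, if_neg (by omega), hib, hja]
        rw [hib, hja]
        simp only [P, Fin.lt_def, hτa, hτb, hav, hbv]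
        omega
      rcases eq_or_ne j b with hjb | hjb
      · rw [hib, hjb]
        simp only [P, Fin.lt_def]
        omega
      · obtain ⟨e1, e2⟩ := hv j hja hjb
        rw [hib]
        simp only [P, Fin.lt_def, hτb, e1, hbv]
        omega
    · obtain ⟨e1i, e2i⟩ := hv i hia hib
      rcases eq_or_ne j a with hja | hja
      · rw [hja]
        simp only [P, Fin.lt_def, hτa, e1i, hav]
        omega
      rcases eq_or_ne j b with hjb | hjb
      · rw [hjb]
        simp only [P, Fin.lt_def, hτb, e1i, hbv]
        omega
      · obtain ⟨e1j, e2j⟩ := hv j hja hjb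
        simp only [P, e1i, e1j]
  -- the pair pq is toggled
  have claim2 : P (τ k * σ) pq ↔ ¬ P σ pq := by
    rcases Nat.lt_or_ge (a : ℕ) (b : ℕ) with h | h
    · rw [hpq, if_pos h] at hmin ⊢
      simp only [P, Fin.lt_def, hτa, hτb, hav, hbv] at *
      omega
    · rw [hpq, if_neg (by omega)] at hmin ⊢
      simp only [P, Fin.lt_def, hτa, hτb, hav, hbv] at *
      omega
  -- assemble
  rw [sign_eq_prod, sign_eq_prod]
  rw [← Finset.mul_prod_erase univ _ (Finset.mem_univ pq),
      ← Finset.mul_prod_erase univ (fun x => if P σ x then (-1 : ℤ) else 1) (Finset.mem_univ pq)]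
  have hrest : ∏ x ∈ univ.erase pq, (if P (τ k * σ) x then (-1 : ℤ) else 1)
      = ∏ x ∈ univ.erase pq, (if P σ x then (-1 : ℤ) else 1) := by
    apply Finset.prod_congr rfl
    intro x hx
    rw [Finset.mem_erase] at hx
    simp only [claim1 x hx.1]
  rw [hrest]
  rcases Classical.em (P σ pq) with h | h
  · rw [if_pos h, if_neg (fun hp => (claim2.mp hp) h)]
    ring
  · rw [if_neg h, if_pos (claim2.mpr h)]
    ring

def glueFun (π : Equiv.Perm (Fin k)) (ρ : Equiv.Perm (Fin 2)) (x : Fin (k + 2)) : Fin (k + 2) :=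
  if h : (x : ℕ) < k then ⟨π ⟨x, h⟩, by have := (π ⟨x, h⟩).isLt; omega⟩
  else ⟨k + ρ ⟨(x : ℕ) - k, by have := x.isLt; omega⟩, by
    have := (ρ ⟨(x : ℕ) - k, by have := x.isLt; omega⟩).isLt; omega⟩

lemma glueFun_inj (π : Equiv.Perm (Fin k)) (ρ : Equiv.Perm (Fin 2)) :
    Function.Injective (glueFun π ρ) := by
  intro x y h
  unfold glueFun at h
  by_cases hx : (x : ℕ) < k <;> by_cases hy : (y : ℕ) < k
  · rw [dif_pos hx, dif_pos hy] at h
    simp only [Fin.mk.injEq] at h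
    have := π.injective (Fin.ext h : π ⟨x, hx⟩ = π ⟨y, hy⟩)
    simpa [Fin.ext_iff] using this
  · rw [dif_pos hx, dif_neg hy] at h
    simp only [Fin.mk.injEq] at h
    have := (π ⟨x, hx⟩).isLt
    omega
  · rw [dif_neg hx, dif_pos hy] at h
    simp only [Fin.mk.injEq] at h
    have := (π ⟨y, hy⟩).isLt
    omega
  · rw [dif_neg hx, dif_neg hy] at h
    simp only [Fin.mk.injEq] at h
    have h2 : (ρ ⟨(x : ℕ) - k, by have := x.isLt; omega⟩ : ℕ)
        = (ρ ⟨(y : ℕ) - k, by have := y.isLt; omega⟩ : ℕ) := by omega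
    have := ρ.injective (Fin.ext h2)
    have hxk := x.isLt
    have hyk := y.isLt
    simp only [Fin.mk.injEq] at this
    exact Fin.ext (by omega)

noncomputable def glue (π : Equiv.Perm (Fin k)) (ρ : Equiv.Perm (Fin 2)) : Equiv.Perm (Fin (k + 2)) :=
  Equiv.ofBijective _ (Finite.injective_iff_bijective.mp (glueFun_inj π ρ))

lemma glue_lt (π : Equiv.Perm (Fin k)) (ρ : Equiv.Perm (Fin 2)) (x : Fin (k + 2))
    (h : (x : ℕ) < k) : (glue π ρ x : ℕ) = π ⟨x, h⟩ := by
  simp only [glue, Equiv.ofBijective_apply, glueFun, dif_pos h]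

lemma glue_ge (π : Equiv.Perm (Fin k)) (ρ : Equiv.Perm (Fin 2)) (x : Fin (k + 2))
    (h : ¬ (x : ℕ) < k) :
    (glue π ρ x : ℕ) = k + ρ ⟨(x : ℕ) - k, by have := x.isLt; omega⟩ := by
  simp only [glue, Equiv.ofBijective_apply, glueFun, dif_neg h]


lemma glue_t0 (π : Equiv.Perm (Fin k)) (ρ : Equiv.Perm (Fin 2)) :
    ((glue π ρ) (t0 k) : ℕ) = k + ρ ⟨0, by omega⟩ := by
  rw [glue_ge π ρ _ (by simp)]
  congr 2
  exact Fin.ext (by simp)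

lemma glue_t1 (π : Equiv.Perm (Fin k)) (ρ : Equiv.Perm (Fin 2)) :
    ((glue π ρ) (t1 k) : ℕ) = k + ρ ⟨1, by omega⟩ := by
  rw [glue_ge π ρ _ (by simp)]
  congr 2
  exact Fin.ext (by simp)

lemma glue_Fcond (π : Equiv.Perm (Fin k)) (ρ : Equiv.Perm (Fin 2)) : Fcond (glue π ρ) := by
  constructor
  · rw [glue_ge π ρ _ (by simp)]; omega
  · rw [glue_ge π ρ _ (by simp)]; omega

lemma glue_stat (π : Equiv.Perm (Fin k)) (ρ : Equiv.Perm (Fin 2)) :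
    stat (glue π ρ) = stat π := by
  unfold stat
  symm
  apply Finset.card_bij
    (fun (y : Fin k × Fin k) _ => ((⟨y.1, by omega⟩ : Fin (k + 2)), (⟨y.2, by omega⟩ : Fin (k + 2))))
  · rintro ⟨i, j⟩ hy
    rw [Finset.mem_filter] at hy ⊢
    obtain ⟨-, h1, h2, h3⟩ := hy
    dsimp only at h1 h2 h3 ⊢
    have e1 := glue_lt π ρ ⟨i, by omega⟩ (by simpa using i.isLt)
    have e2 := glue_lt π ρ ⟨j, by omega⟩ (by simpa using j.isLt)
    simp only [Fin.eta] at e1 e2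
    rw [Fin.lt_def] at h1 h2 h3
    refine ⟨Finset.mem_univ _, ?_, ?_, ?_⟩ <;> rw [Fin.lt_def]
    · simpa using h1
    · simp only [e1, e2]; omega
    · simp only [e2]; omega
  · rintro ⟨i, j⟩ - ⟨i', j'⟩ - h
    simp only [Prod.mk.injEq, Fin.mk.injEq] at h
    exact Prod.ext (Fin.ext h.1) (Fin.ext h.2)
  · rintro ⟨i, j⟩ hy
    rw [Finset.mem_filter] at hy
    obtain ⟨-, h1, h2, h3⟩ := hy
    dsimp only at h1 h2 h3
    rw [Fin.lt_def] at h1 h2 h3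
    have hjk : (j : ℕ) < k := by
      by_contra hj
      have e2 := glue_ge π ρ j hj
      have hik : ¬ (i : ℕ) < k := by
        intro hi
        have e1 := glue_lt π ρ i hi
        have := (π ⟨i, hi⟩).isLt
        omega
      have e1 := glue_ge π ρ i hik
      have hρ1 := (ρ ⟨(i : ℕ) - k, by have := i.isLt; omega⟩).isLt
      have hρ2 := (ρ ⟨(j : ℕ) - k, by have := j.isLt; omega⟩).isLt
      omega
    have hik : (i : ℕ) < k := by omega
    have e1 := glue_lt π ρ i hik
    have e2 := glue_lt π ρ j hjk
    refine ⟨(⟨i, hik⟩, ⟨j, hjk⟩), Finset.mem_filter.mpr ⟨Finset.mem_univ _, ?_, ?_, ?_⟩, ?_⟩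
    · rw [Fin.lt_def]; simpa using h1
    · rw [Fin.lt_def]
      simp only [Fin.eta] at e1 e2 ⊢
      omega
    · rw [Fin.lt_def]
      simp only [Fin.eta] at e2 ⊢
      omega
    · simp [Fin.ext_iff]

def S (n : ℕ) : ℤ := ∑ σ : Equiv.Perm (Fin n), (-1 : ℤ) ^ stat σ

set_option maxHeartbeats 2000000 in
lemma sum_Fcond : ∑ σ ∈ univ.filter (Fcond (k := k)), (-1 : ℤ) ^ stat σ = 2 * S k := by
  have h2 : (2 : ℤ) * S k = ∑ x : Equiv.Perm (Fin k) × Equiv.Perm (Fin 2),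
      (-1 : ℤ) ^ stat x.1 := by
    rw [Fintype.sum_prod_type, S]
    have : ∀ π : Equiv.Perm (Fin k),
        ∑ _ρ : Equiv.Perm (Fin 2), (-1 : ℤ) ^ stat π = 2 * (-1 : ℤ) ^ stat π := by
      intro π
      rw [Finset.sum_const, Finset.card_univ,
        show (Fintype.card (Equiv.Perm (Fin 2))) = 2 by
          rw [Fintype.card_perm, Fintype.card_fin]; rfl]
      push_cast
      ring
    rw [Finset.sum_congr rfl (fun π _ => this π), ← Finset.mul_sum]
  rw [h2]
  symm
  apply Finset.sum_bij (fun x _ => glue x.1 x.2)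
  · intro x _
    exact Finset.mem_filter.mpr ⟨Finset.mem_univ _, glue_Fcond x.1 x.2⟩
  · rintro ⟨π, ρ⟩ - ⟨π', ρ'⟩ - h
    have hπ : π = π' := by
      ext i
      have hh := congrArg (fun σ : Equiv.Perm (Fin (k + 2)) => (σ ⟨i, by omega⟩ : ℕ)) h
      simp only at hh
      rw [glue_lt π ρ _ (by simpa using i.isLt), glue_lt π' ρ' _ (by simpa using i.isLt)] at hh
      simpa [Fin.ext_iff] using hh
    have hρ : ρ = ρ' := by
      have hh0 := congrArg (fun σ : Equiv.Perm (Fin (k + 2)) => (σ (t0 k) : ℕ)) h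
      have hh1 := congrArg (fun σ : Equiv.Perm (Fin (k + 2)) => (σ (t1 k) : ℕ)) h
      simp only [glue_t0, glue_t1] at hh0 hh1
      ext j
      have hj := j.isLt
      rcases Nat.lt_or_ge (j : ℕ) 1 with h' | h'
      · have e : j = (⟨0, by omega⟩ : Fin 2) := Fin.ext (by omega : (j : ℕ) = 0)
        rw [e]
        omega
      · have e : j = (⟨1, by omega⟩ : Fin 2) := Fin.ext (by omega : (j : ℕ) = 1)
        rw [e]
        omega
    rw [Prod.ext_iff]
    exact ⟨hπ, hρ⟩
  · intro σ hσ
    rw [Finset.mem_filter] at hσ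
    obtain ⟨-, hF⟩ := hσ
    have hsmall : ∀ x : Fin (k + 2), (x : ℕ) < k → (σ x : ℕ) < k := by
      intro x hx
      by_contra hcon
      push_neg at hcon
      have hx0 : x ≠ t0 k := fun h => by rw [h, t0_val] at hx; omega
      have hx1 : x ≠ t1 k := fun h => by rw [h, t1_val] at hx; omega
      rcases val_cases (σ x) hcon with h | h
      · rcases val_cases (σ (t0 k)) hF.1 with h' | h'
        · exact hx0 (σ.injective (h.trans h'.symm))
        · rcases val_cases (σ (t1 k)) hF.2 with h'' | h''
          · exact hx1 (σ.injective (h.trans h''.symm))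
          · exact t0_ne_t1 (σ.injective (h'.trans h''.symm))
      · rcases val_cases (σ (t1 k)) hF.2 with h' | h'
        · rcases val_cases (σ (t0 k)) hF.1 with h'' | h''
          · exact t0_ne_t1 (σ.injective (h''.trans h'.symm))
          · exact hx0 (σ.injective (h.trans h''.symm))
        · exact hx1 (σ.injective (h.trans h'.symm))
    have hbig : ∀ x : Fin (k + 2), ¬ (x : ℕ) < k → k ≤ (σ x : ℕ) := by
      intro x hx
      rcases val_cases x (by omega) with h | h
      · rw [h]; exact hF.1
      · rw [h]; exact hF.2
    have hπinj : Function.Injective (fun i : Fin k =>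
        (⟨(σ ⟨i, by omega⟩ : ℕ), hsmall ⟨i, by omega⟩ (by simpa using i.isLt)⟩ : Fin k)) := by
      intro i i' h
      simp only [Fin.mk.injEq] at h
      have := σ.injective (Fin.ext h : σ ⟨i, by omega⟩ = σ ⟨i', by omega⟩)
      simpa [Fin.ext_iff] using this
    have hρinj : Function.Injective (fun j : Fin 2 =>
        (⟨(σ ⟨k + j, by omega⟩ : ℕ) - k, by
          have hb1 := hbig ⟨k + j, by omega⟩ (by simp)
          have hb2 := (σ ⟨k + (j : ℕ), by omega⟩).isLt
          omega⟩ : Fin 2)) := by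
      intro j j' h
      simp only [Fin.mk.injEq] at h
      have hb1 := hbig ⟨k + j, by omega⟩ (by simp)
      have hb2 := hbig ⟨k + j', by omega⟩ (by simp)
      have he : σ ⟨k + j, by omega⟩ = σ ⟨k + j', by omega⟩ := Fin.ext (by omega)
      have := σ.injective he
      simpa [Fin.ext_iff] using this
    refine ⟨(Equiv.ofBijective _ ((Finite.injective_iff_bijective).mp hπinj),
      Equiv.ofBijective _ ((Finite.injective_iff_bijective).mp hρinj)), Finset.mem_univ _, ?_⟩
    ext x
    by_cases hx : (x : ℕ) < k
    · rw [glue_lt _ _ _ hx]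
      simp [Equiv.ofBijective_apply]
    · rw [glue_ge _ _ _ hx]
      simp only [Equiv.ofBijective_apply]
      have h1 := hbig x hx
      have hxx : (⟨k + ((⟨(x : ℕ) - k, by have := x.isLt; omega⟩ : Fin 2) : ℕ), by
          have := x.isLt; simp; omega⟩ : Fin (k + 2)) = x := Fin.ext (by have := x.isLt; simp; omega)
      rw [hxx]
      omega
  · intro x _
    rw [glue_stat]

lemma flip' (σ : Equiv.Perm (Fin (k + 2))) (hσ : ¬ Fcond σ) :
    (-1 : ℤ) ^ stat σ + (-1 : ℤ) ^ stat (τ k * σ) = 0 := by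
  rw [flip σ hσ]; ring

lemma step : S (k + 2) = 2 * S k := by
  have hsplit : S (k + 2) = ∑ σ ∈ univ.filter (Fcond (k := k)), (-1 : ℤ) ^ stat σ
      + ∑ σ ∈ univ.filter (fun σ : Equiv.Perm (Fin (k + 2)) => ¬ Fcond σ), (-1 : ℤ) ^ stat σ := by
    rw [S, ← Finset.sum_filter_add_sum_filter_not univ (Fcond (k := k))]
  rw [hsplit, sum_Fcond]
  have hzero : ∑ σ ∈ univ.filter (fun σ : Equiv.Perm (Fin (k + 2)) => ¬ Fcond σ), (-1 : ℤ) ^ stat σ = 0 := by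
    apply Finset.sum_involution (fun σ _ => τ k * σ)
    · intro σ hσ
      rw [Finset.mem_filter] at hσ
      exact flip' σ hσ.2
    · intro σ _ _ h
      have hh := congrArg (fun f : Equiv.Perm (Fin (k + 2)) => f (σ⁻¹ (t0 k))) h
      simp only [Equiv.Perm.mul_apply, Equiv.Perm.inv_def, Equiv.apply_symm_apply] at hh
      exact t0_ne_t1 ((Equiv.swap_apply_left (t0 k) (t1 k)).symm.trans hh).symm
    · intro σ hσ
      rw [Finset.mem_filter] at hσ ⊢
      refine ⟨Finset.mem_univ _, ?_⟩
      intro hF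
      apply hσ.2
      have hττ : ∀ v : Fin (k + 2), k ≤ (τ k v : ℕ) → k ≤ (v : ℕ) := by
        intro v hv
        by_contra hcon
        push_neg at hcon
        have h1 : v ≠ t0 k := fun h => by rw [h, t0_val] at hcon; omega
        have h2 : v ≠ t1 k := fun h => by rw [h, t1_val] at hcon; omega
        rw [τ, Equiv.swap_apply_of_ne_of_ne h1 h2] at hv
        omega
      obtain ⟨hF1, hF2⟩ := hF
      simp only [Equiv.Perm.mul_apply] at hF1 hF2
      exact ⟨hττ _ hF1, hττ _ hF2⟩
    · intro σ _
      rw [← mul_assoc, τ, Equiv.swap_mul_self, one_mul]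
  rw [hzero, add_zero]

lemma S_zero : S 0 = 1 := by
  rw [S, Fintype.sum_subsingleton _ (1 : Equiv.Perm (Fin 0))]
  have h : stat (1 : Equiv.Perm (Fin 0)) = 0 := by
    rw [stat]
    apply Finset.card_eq_zero.mpr
    apply Finset.filter_eq_empty_iff.mpr
    rintro ⟨⟨i, hi⟩, -⟩ -
    omega
  rw [h, pow_zero]

lemma S_one : S 1 = 1 := by
  rw [S, Fintype.sum_subsingleton _ (1 : Equiv.Perm (Fin 1))]
  have h : stat (1 : Equiv.Perm (Fin 1)) = 0 := by
    rw [stat]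
    apply Finset.card_eq_zero.mpr
    apply Finset.filter_eq_empty_iff.mpr
    rintro ⟨⟨i, hi⟩, ⟨j, hj⟩⟩ -
    rw [P]
    simp only [Fin.lt_def]
    omega
  rw [h, pow_zero]

lemma S_eq : ∀ n : ℕ, S n = 2 ^ (n / 2) := by
  intro n
  induction n using Nat.strong_induction_on with
  | _ n ih =>
    match n with
    | 0 => simpa using S_zero
    | 1 => simpa using S_one
    | (k + 2) =>
      rw [step, ih k (by omega), show (k + 2) / 2 = k / 2 + 1 by omega]
      ring

end InvInv

open InvInv in
/-- The generating function of the number of invisible inversions on `S_n`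
evaluated at `q = -1` equals `2^⌊n/2⌋`. An invisible inversion is a pair
`(i,j)` with `i < j` and `σ i > σ j > i`. -/
theorem invisible_inversions_q_eq_neg_one (n : ℕ) (hn : 0 < n) :
    ∑ σ : Equiv.Perm (Fin n),
      (-1 : ℤ) ^ (univ.filter (fun p : Fin n × Fin n =>
        p.1 < p.2 ∧ σ p.2 < σ p.1 ∧ p.1 < σ p.2)).card
      = 2 ^ (n / 2) := by
  have hS := S_eq n
  rw [S] at hS
  rw [← hS]
  apply Finset.sum_congr rfl
  intro σ _
  congr 1
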